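/- For integers n ≥ 10, every integer m with 3n - 11 ≤ m ≤ ⌊(n-1)/2⌋·⌈(n-1)/2⌉ + 2 can be written as m = b(n-b-3) + n + a - b + 1 for some integers a ≥ 0, b ≥ 2 with a + b ≤ n - 5. -/

import Mathlib

theorem stmt_10 (n m : ℤ) (hn : 10 ≤ n) (hm₁ : 3 * n - 11 ≤ m)
    (hm₂ : m ≤ ((n - 1) / 2) * (n / 2) + 2) :
    ∃ a b : ℤ, 0 ≤ a ∧ 2 ≤ b ∧ a + b ≤ n - 5 ∧
      m = b * (n - b - 3) + n + a - b + 1 := by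
  have key : ∀ k : ℤ, 3 * n - 11 ≤ k → k ≤ ((n - 1) / 2) * (n / 2) + 2 →
      ∃ a b : ℤ, 0 ≤ a ∧ 2 ≤ b ∧ a + b ≤ n - 5 ∧ 2 * b ≤ n - 5 ∧
        k = b * (n - b - 3) + n + a - b + 1 := by
    intro k hk
    refine Int.le_induction (motive := fun k _ => k ≤ ((n - 1) / 2) * (n / 2) + 2 →
        ∃ a b : ℤ, 0 ≤ a ∧ 2 ≤ b ∧ a + b ≤ n - 5 ∧ 2 * b ≤ n - 5 ∧
          k = b * (n - b - 3) + n + a - b + 1) ?_ ?_ k hk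
    · intro _
      exact ⟨0, 2, by omega, by omega, by omega, by omega, by ring⟩
    · intro m hm ih hle
      have hMm : m ≤ ((n - 1) / 2) * (n / 2) + 2 := by omega
      obtain ⟨a, b, ha, hb, hab, hb2, heq⟩ := ih hMm
      by_cases hcase : a + b ≤ n - 6
      · exact ⟨a + 1, b, by omega, hb, by omega, hb2, by linear_combination heq⟩
      · have haeq : a = n - b - 5 := by omega
        subst haeq
        -- show 2*b ≤ n - 7
        have hb7 : 2 * b ≤ n - 7 := by
          by_contra hcon
          have : n = 2 * b + 5 ∨ n = 2 * b + 6 := by omega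
          rcases this with hne | hne
          · subst hne
            have e1 : (2 * b + 5 - 1) / 2 = b + 2 := by omega
            have e2 : (2 * b + 5) / 2 = b + 2 := by omega
            rw [e1, e2] at hle
            have hm' : m = b * b + 4 * b + 6 := by linear_combination heq
            nlinarith
          · subst hne
            have e1 : (2 * b + 6 - 1) / 2 = b + 2 := by omega
            have e2 : (2 * b + 6) / 2 = b + 3 := by omega
            rw [e1, e2] at hle
            have hm' : m = b * b + 5 * b + 8 := by linear_combination heq
            nlinarith
        exact ⟨b + 1, b + 1, by omega, by omega, by omega, by omega,
          by linear_combination heq⟩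
  obtain ⟨a, b, ha, hb, hab, _, heq⟩ := key m hm₁ hm₂
  exact ⟨a, b, ha, hb, hab, heq⟩
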